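/- Let K_A ⊆ ℝ^m and K_B' ⊆ ℝ^n be convex compact sets, with K_B ⊆ K_B' convex compact, and let g : K_A × K_B' → ℝ be affine (or bilinear) in each argument. Suppose strategies p_1,…,p_T ∈ K_A and q_1,…,q_T ∈ K_B' satisfy: (i) for each t, g(p_t, q_t) ≥ max_{q ∈ K_B} g(p_t, q) - ε₀ (approximate best response), and (ii) for every p* ∈ K_A, ∑_t g(p_t, q_t) ≤ ∑_t g(p*, q_t) + R (regret bound). Then the average q̄ = (1/T)∑_t q_t ∈ K_B' satisfies, for every p* ∈ K_A, λ* ≤ g(p*, q̄) + R/T + ε₀, where λ* = min_{p ∈ K_A} max_{q ∈ K_B} g(p, q). -/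
import Mathlib

/-- Pairwise affinity extends to finite convex combinations. -/
lemma aff_comb {α : Type*} [AddCommGroup α] [Module ℝ α] (f : α → ℝ)
    (hf : ∀ a b : α, ∀ s t : ℝ, 0 ≤ s → 0 ≤ t → s + t = 1 →
      f (s • a + t • b) = s * f a + t * f b)
    {ι : Type*} (s : Finset ι) (w : ι → ℝ) (x : ι → α)
    (hw : ∀ i ∈ s, 0 ≤ w i) (h1 : ∑ i ∈ s, w i = 1) :
    f (∑ i ∈ s, w i • x i) = ∑ i ∈ s, w i * f (x i) := by
  induction s using Finset.cons_induction generalizing w with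
  | empty => simp at h1
  | cons a s ha ih =>
    rw [Finset.sum_cons] at h1 ⊢
    rw [Finset.sum_cons]
    have hwa : 0 ≤ w a := hw a (Finset.mem_cons_self a s)
    have hws : ∀ i ∈ s, 0 ≤ w i := fun i hi => hw i (Finset.mem_cons_of_mem hi)
    set c := ∑ i ∈ s, w i with hc
    have hcnn : 0 ≤ c := Finset.sum_nonneg hws
    rcases eq_or_lt_of_le hcnn with hc0 | hcpos
    · have hall : ∀ i ∈ s, w i = 0 := by
        intro i hi
        exact le_antisymm (by
          have := Finset.single_le_sum hws hi
          linarith [this]) (hws i hi)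
      have hwa1 : w a = 1 := by rw [← hc0] at h1; linarith
      have hsum0 : ∑ i ∈ s, w i • x i = 0 :=
        Finset.sum_eq_zero fun i hi => by rw [hall i hi, zero_smul]
      have hrhs0 : ∑ i ∈ s, w i * f (x i) = 0 :=
        Finset.sum_eq_zero fun i hi => by rw [hall i hi, zero_mul]
      have := hf (x a) 0 1 0 zero_le_one le_rfl (by norm_num)
      simp only [one_smul, zero_smul, add_zero, one_mul, zero_mul] at this
      rw [hsum0, hrhs0, hwa1, one_smul, add_zero, one_mul, add_zero]
    · have hcne : c ≠ 0 := ne_of_gt hcpos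
      have hy : ∑ i ∈ s, w i • x i = c • ∑ i ∈ s, (w i / c) • x i := by
        rw [Finset.smul_sum]
        refine Finset.sum_congr rfl fun i hi => ?_
        rw [smul_smul, mul_div_cancel₀ _ hcne]
      have hIH : f (∑ i ∈ s, (w i / c) • x i) = ∑ i ∈ s, (w i / c) * f (x i) := by
        refine ih _ (fun i hi => div_nonneg (hws i hi) hcnn) ?_
        rw [← Finset.sum_div, ← hc, div_self hcne]
      rw [hy, hf (x a) _ (w a) c hwa hcnn h1, hIH, Finset.mul_sum]
      congr 1
      refine Finset.sum_congr rfl fun i hi => ?_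
      rw [← mul_assoc, mul_div_cancel₀ _ hcne]

/-- Deterministic core of Proposition 4 (Improper Zero Sum Games with Oracles):
    given approximate-best-response play by B over the improper set K_B' and a
    regret bound for A, the average improper strategy q̄ lies in K_B' and satisfies
    λ* ≤ g(p*, q̄) + R/T + ε₀ for every p* ∈ K_A, where
    λ* = min_{p ∈ K_A} max_{q ∈ K_B} g(p,q). -/
theorem stmt5 {m n : ℕ} (KA : Set (Fin m → ℝ)) (KB KB' : Set (Fin n → ℝ))
    (hKAc : IsCompact KA) (hKAconv : Convex ℝ KA) (hKAne : KA.Nonempty)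
    (hKBc : IsCompact KB) (hKBconv : Convex ℝ KB) (hKBne : KB.Nonempty)
    (hKB'c : IsCompact KB') (hKB'conv : Convex ℝ KB') (hsub : KB ⊆ KB')
    (g : (Fin m → ℝ) → (Fin n → ℝ) → ℝ)
    (hgAff1 : ∀ q, ∀ a b : Fin m → ℝ, ∀ s t : ℝ, 0 ≤ s → 0 ≤ t → s + t = 1 →
      g (s • a + t • b) q = s * g a q + t * g b q)
    (hgAff2 : ∀ p, ∀ a b : Fin n → ℝ, ∀ s t : ℝ, 0 ≤ s → 0 ≤ t → s + t = 1 →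
      g p (s • a + t • b) = s * g p a + t * g p b)
    (hgCont : Continuous fun pq : (Fin m → ℝ) × (Fin n → ℝ) => g pq.1 pq.2)
    (T : ℕ) (hT : 0 < T) (P : Fin T → (Fin m → ℝ)) (Q : Fin T → (Fin n → ℝ))
    (hP : ∀ t, P t ∈ KA) (hQ : ∀ t, Q t ∈ KB')
    (ε₀ R : ℝ) (hε₀ : 0 ≤ ε₀)
    (hbr : ∀ t, ∀ q ∈ KB, g (P t) (Q t) ≥ g (P t) q - ε₀)
    (hreg : ∀ pstar ∈ KA, ∑ t, g (P t) (Q t) ≤ ∑ t, g pstar (Q t) + R) :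
    ((T : ℝ)⁻¹ • ∑ t, Q t) ∈ KB' ∧
    ∀ pstar ∈ KA,
      sInf ((fun p => sSup ((g p) '' KB)) '' KA)
        ≤ g pstar ((T : ℝ)⁻¹ • ∑ t, Q t) + R / T + ε₀ := by
  have hTR : (0:ℝ) < T := by exact_mod_cast hT
  have hTinv : (0:ℝ) ≤ (T:ℝ)⁻¹ := by positivity
  have hwsum : ∑ _t : Fin T, (T:ℝ)⁻¹ = 1 := by
    rw [Finset.sum_const, Finset.card_univ, Fintype.card_fin, nsmul_eq_mul,
      mul_inv_cancel₀ (ne_of_gt hTR)]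
  -- rewrite averages as convex combinations
  have hqbar : (T : ℝ)⁻¹ • ∑ t, Q t = ∑ t, (T:ℝ)⁻¹ • Q t := Finset.smul_sum
  have hqmem : ((T : ℝ)⁻¹ • ∑ t, Q t) ∈ KB' := by
    rw [hqbar]
    exact hKB'conv.sum_mem (fun i _ => hTinv) hwsum (fun i _ => hQ i)
  refine ⟨hqmem, ?_⟩
  intro pstar hpstar
  -- average of P
  set pbar : Fin m → ℝ := ∑ t, (T:ℝ)⁻¹ • P t with hpbar
  have hpmem : pbar ∈ KA :=
    hKAconv.sum_mem (fun i _ => hTinv) hwsum (fun i _ => hP i)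
  -- continuity of sections
  have hcont1 : ∀ p, Continuous fun q => g p q := fun p =>
    hgCont.comp (Continuous.prodMk_right p)
  -- global lower bound on g over KA × KB
  obtain ⟨⟨p0, q0⟩, hpq0, hmin⟩ := (hKAc.prod hKBc).exists_isMinOn
    (hKAne.prod hKBne) hgCont.continuousOn
  have hq0 : q0 ∈ KB := hpq0.2
  -- bddBelow of the outer set
  have hbddB : BddBelow ((fun p => sSup ((g p) '' KB)) '' KA) := by
    refine ⟨g p0 q0, ?_⟩
    rintro y ⟨p, hp, rfl⟩
    have h1 : g p q0 ≤ sSup ((g p) '' KB) :=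
      le_csSup ((hKBc.image (hcont1 p)).bddAbove) ⟨q0, hq0, rfl⟩
    exact le_trans (hmin (Set.mk_mem_prod hp hq0)) h1
  have hInf : sInf ((fun p => sSup ((g p) '' KB)) '' KA) ≤ sSup ((g pbar) '' KB) :=
    csInf_le hbddB ⟨pbar, hpmem, rfl⟩
  -- maximizer of g pbar over KB
  obtain ⟨qs, hqs, hmax⟩ := hKBc.exists_isMaxOn hKBne (hcont1 pbar).continuousOn
  have hSup : sSup ((g pbar) '' KB) ≤ g pbar qs := by
    refine csSup_le (hKBne.image _) ?_
    rintro y ⟨q, hq, rfl⟩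
    exact hmax hq
  -- affine expansion in the first argument
  have hexp1 : g pbar qs = ∑ t, (T:ℝ)⁻¹ * g (P t) qs := by
    exact aff_comb (fun p => g p qs) (fun a b s t hs ht hst => hgAff1 qs a b s t hs ht hst)
      Finset.univ _ P (fun i _ => hTinv) hwsum
  -- best response bound
  have hstep1 : ∑ t, (T:ℝ)⁻¹ * g (P t) qs ≤ (T:ℝ)⁻¹ * (∑ t, g (P t) (Q t)) + ε₀ := by
    have : ∑ t, (T:ℝ)⁻¹ * g (P t) qs ≤ ∑ t, (T:ℝ)⁻¹ * (g (P t) (Q t) + ε₀) := by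
      refine Finset.sum_le_sum fun i _ => ?_
      have := hbr i qs hqs
      exact mul_le_mul_of_nonneg_left (by linarith) hTinv
    calc ∑ t, (T:ℝ)⁻¹ * g (P t) qs ≤ ∑ t, (T:ℝ)⁻¹ * (g (P t) (Q t) + ε₀) := this
      _ = (T:ℝ)⁻¹ * (∑ t, g (P t) (Q t)) + ε₀ := by
          simp only [mul_add]
          rw [Finset.sum_add_distrib, ← Finset.mul_sum, Finset.sum_const, Finset.card_univ,
            Fintype.card_fin, nsmul_eq_mul, ← mul_assoc,
            mul_inv_cancel₀ (ne_of_gt hTR), one_mul]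
  -- regret
  have hstep2 : (T:ℝ)⁻¹ * (∑ t, g (P t) (Q t)) ≤ (T:ℝ)⁻¹ * (∑ t, g pstar (Q t)) + R / T := by
    have h := hreg pstar hpstar
    have := mul_le_mul_of_nonneg_left h hTinv
    rw [mul_add] at this
    have hRT : R / (T:ℝ) = (T:ℝ)⁻¹ * R := by rw [div_eq_mul_inv, mul_comm]
    rw [hRT]
    exact this
  -- affine expansion in the second argument
  have hexp2 : g pstar ((T : ℝ)⁻¹ • ∑ t, Q t) = ∑ t, (T:ℝ)⁻¹ * g pstar (Q t) := by
    rw [hqbar]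
    exact aff_comb (fun q => g pstar q) (fun a b s t hs ht hst => hgAff2 pstar a b s t hs ht hst)
      Finset.univ _ Q (fun i _ => hTinv) hwsum
  rw [hexp2, ← Finset.mul_sum]
  linarith [hInf, hSup, hexp1, hstep1, hstep2]
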